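/- Let k ≥ 2, S₁ the standard basis vectors in ℝ^k, F = S₁, 𝟙 the all-ones vector, and t^k = (1/k,...,1/k) ∈ Conv(S₁ ∪ {𝟙}). Suppose (x, p) is a mechanism on Conv(S₁ ∪ {𝟙}) (possibly randomized allocations supported on F) that is DSIC and IR on this convex hull. Then p(𝟙) ≤ 1/k. -/

import Mathlib

open Finset

/-- Standard inner product on ℝ^k. -/
def dot {k : ℕ} (x y : Fin k → ℝ) : ℝ := ∑ i, x i * y i

/-- Any (possibly randomized over F = standard basis vectors) mechanism that is
DSIC and IR on Conv(S₁ ∪ {𝟙}) charges the all-ones type at most 1/k.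
Here `x t j` is the probability that report `t` receives basis vector `e_j`,
so the expected value of type `t` for report `t'` is `∑ j, x t' j * t j`. -/
theorem stmt14 (k : ℕ) (hk : 2 ≤ k)
    (S1 : Set (Fin k → ℝ)) (ones : Fin k → ℝ)
    (hS1 : S1 = {t | ∃ j : Fin k, t = Pi.single j (1 : ℝ)})
    (hones : ones = fun _ => (1 : ℝ))
    (x : (Fin k → ℝ) → Fin k → ℝ) (p : (Fin k → ℝ) → ℝ)
    (hprob : ∀ t ∈ convexHull ℝ (S1 ∪ {ones}), (∀ j, 0 ≤ x t j) ∧ ∑ j, x t j = 1)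
    (hDSIC : ∀ t ∈ convexHull ℝ (S1 ∪ {ones}), ∀ t' ∈ convexHull ℝ (S1 ∪ {ones}),
      (∑ j, x t j * t j) - p t ≥ (∑ j, x t' j * t j) - p t')
    (hIR : ∀ t ∈ convexHull ℝ (S1 ∪ {ones}), (∑ j, x t j * t j) - p t ≥ 0) :
    p ones ≤ 1 / k := by
  subst hones
  have hk0 : (0 : ℝ) < (k : ℝ) := by exact_mod_cast Nat.lt_of_lt_of_le Nat.zero_lt_two hk
  have hkne : (k : ℝ) ≠ 0 := ne_of_gt hk0
  let ones : Fin k → ℝ := fun _ => (1 : ℝ)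
  let tk : Fin k → ℝ := fun _ => (1 : ℝ) / k
  have hones_mem : ones ∈ convexHull ℝ (S1 ∪ {ones}) :=
    subset_convexHull ℝ _ (Or.inr rfl)
  have htk_mem : tk ∈ convexHull ℝ (S1 ∪ {ones}) := by
    have heq : tk = ∑ j : Fin k, ((1 : ℝ) / k) • (Pi.single j (1 : ℝ) : Fin k → ℝ) := by
      funext i
      simp only [Finset.sum_apply, Pi.smul_apply, Pi.single_apply, smul_eq_mul,
        mul_ite, mul_one, mul_zero, Finset.sum_ite_eq, Finset.mem_univ, if_true]
      rfl
    rw [heq]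
    apply (convex_convexHull ℝ _).sum_mem
    · intro j _; positivity
    · rw [Finset.sum_const, Finset.card_univ, Fintype.card_fin, nsmul_eq_mul]
      field_simp
    · intro j _
      exact subset_convexHull ℝ _ (Or.inl (by rw [hS1]; exact ⟨j, rfl⟩))
  have hsum_tk : ∑ j, x tk j = 1 := (hprob tk htk_mem).2
  have hsum_ones : ∑ j, x ones j = 1 := (hprob ones hones_mem).2
  have hIRtk := hIR tk htk_mem
  have hval_tk : ∑ j, x tk j * tk j = 1 / k := by
    have : ∀ j, x tk j * tk j = x tk j * (1 / k) := fun j => rfl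
    simp only [this]
    rw [← Finset.sum_mul, hsum_tk, one_mul]
  rw [hval_tk] at hIRtk
  have hD := hDSIC ones hones_mem tk htk_mem
  have hv1 : ∑ j, x ones j * ones j = 1 := by
    simp only [show ∀ j, x ones j * ones j = x ones j from fun j => mul_one _]
    exact hsum_ones
  have hv2 : ∑ j, x tk j * ones j = 1 := by
    simp only [show ∀ j, x tk j * ones j = x tk j from fun j => mul_one _]
    exact hsum_tk
  rw [hv1, hv2] at hD
  show p ones ≤ 1 / k
  linarith
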